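/- Let Σ and H₀ be real symmetric positive definite d×d matrices and H₁ a real symmetric d×d matrix. Set T := (Σ^{1/2} H₀ Σ^{1/2})^{1/2}. Then, as ε → 0, B²(Σ, H₀ + ε H₁) = B²(Σ, H₀) + ε tr(H₁) − 2ε tr( L_T^{-1}[Σ^{1/2} H₁ Σ^{1/2}] ) + 2ε² tr( L_T^{-1}[ (L_T^{-1}[Σ^{1/2} H₁ Σ^{1/2}])² ] ) + o(ε²). -/

import Mathlib

open Matrix Filter Topology Asymptotics

/-- The positive semidefinite square root of a matrix (zero if the matrix is not
positive semidefinite). -/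
noncomputable def psdSqrt {d : ℕ} (M : Matrix (Fin d) (Fin d) ℝ) :
    Matrix (Fin d) (Fin d) ℝ :=
  open scoped Classical in
  if h : M.PosSemidef then
    h.1.eigenvectorUnitary.1 * diagonal ((↑) ∘ (√·) ∘ h.1.eigenvalues) *
      (star h.1.eigenvectorUnitary : Matrix (Fin d) (Fin d) ℝ)
  else 0

/-- The squared Bures distance `B²(P,Q) = tr(P + Q − 2 (P^{1/2} Q P^{1/2})^{1/2})`. -/
noncomputable def bures2 {d : ℕ} (P Q : Matrix (Fin d) (Fin d) ℝ) : ℝ :=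
  (P + Q - (2 : ℝ) • psdSqrt (psdSqrt P * Q * psdSqrt P)).trace

/-- The Sylvester operator `L_M[X] = M X + X M`. -/
def sylv {d : ℕ} (M X : Matrix (Fin d) (Fin d) ℝ) : Matrix (Fin d) (Fin d) ℝ :=
  M * X + X * M

/-- The explicit square root of a positive semidefinite matrix. -/
noncomputable abbrev Matrix.PosSemidef.sqrt {d : ℕ} {M : Matrix (Fin d) (Fin d) ℝ}
    (h : M.PosSemidef) : Matrix (Fin d) (Fin d) ℝ :=
  h.1.eigenvectorUnitary.1 * diagonal ((↑) ∘ (√·) ∘ h.1.eigenvalues) *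
    (star h.1.eigenvectorUnitary : Matrix (Fin d) (Fin d) ℝ)

open scoped MatrixOrder in
lemma Matrix.PosSemidef.sqrt_eq_cfc {d : ℕ} {M : Matrix (Fin d) (Fin d) ℝ}
    (h : M.PosSemidef) : h.sqrt = CFC.sqrt M := by
  rw [CFC.sqrt_eq_cfc, cfc_nnreal_eq_real _ M, h.1.cfc_eq]
  simp only [Matrix.PosSemidef.sqrt, IsHermitian.cfc, Unitary.conjStarAlgAut_apply,
    Unitary.coe_star]
  congr 2
  refine congrArg diagonal ?_
  funext i
  simp [Real.coe_sqrt, Real.coe_toNNReal', max_eq_left (h.eigenvalues_nonneg i)]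

open scoped MatrixOrder in
lemma Matrix.PosSemidef.posSemidef_sqrt {d : ℕ} {M : Matrix (Fin d) (Fin d) ℝ}
    (h : M.PosSemidef) : h.sqrt.PosSemidef := by
  rw [h.sqrt_eq_cfc]; exact (CFC.sqrt_nonneg M).posSemidef

open scoped MatrixOrder in
lemma Matrix.PosSemidef.sqrt_mul_self {d : ℕ} {M : Matrix (Fin d) (Fin d) ℝ}
    (h : M.PosSemidef) : h.sqrt * h.sqrt = M := by
  rw [h.sqrt_eq_cfc]; exact CFC.sqrt_mul_sqrt_self M h.nonneg

open scoped MatrixOrder in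
lemma Matrix.PosSemidef.eq_sqrt_of_sq_eq {d : ℕ} {B M : Matrix (Fin d) (Fin d) ℝ}
    (hB : B.PosSemidef) (h : M.PosSemidef) (hsq : B ^ 2 = M) : B = h.sqrt := by
  rw [h.sqrt_eq_cfc]; exact (CFC.sqrt_unique (by rw [← pow_two]; exact hsq) hB.nonneg).symm

section Aux
variable {d : ℕ}

lemma real_conjTranspose_eq (M : Matrix (Fin d) (Fin d) ℝ) : Mᴴ = Mᵀ := by
  ext i j; simp [Matrix.conjTranspose_apply]

lemma isHermitian_of_transpose_eq {M : Matrix (Fin d) (Fin d) ℝ} (h : Mᵀ = M) :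
    M.IsHermitian := by rw [Matrix.IsHermitian, real_conjTranspose_eq, h]

lemma transpose_eq_of_isHermitian {M : Matrix (Fin d) (Fin d) ℝ} (h : M.IsHermitian) :
    Mᵀ = M := by rw [← real_conjTranspose_eq]; exact h

lemma dotProduct_self_pos {x : Fin d → ℝ} (hx : x ≠ 0) : 0 < x ⬝ᵥ x := by
  obtain ⟨i, hi⟩ := Function.ne_iff.mp hx
  rw [dotProduct]
  refine Finset.sum_pos' (fun j _ => mul_self_nonneg _) ⟨i, Finset.mem_univ i, ?_⟩
  exact mul_self_pos.mpr (by simpa using hi)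

lemma posDef_coercive {A : Matrix (Fin d) (Fin d) ℝ} (hA : A.PosDef) :
    ∃ c > 0, ∀ x : Fin d → ℝ, c * (x ⬝ᵥ x) ≤ x ⬝ᵥ (A *ᵥ x) := by
  rcases isEmpty_or_nonempty (Fin d) with hde | hde
  · exact ⟨1, one_pos, fun x => by simp [dotProduct]⟩
  have hH := hA.isHermitian
  set U : Matrix (Fin d) (Fin d) ℝ := (hH.eigenvectorUnitary : Matrix (Fin d) (Fin d) ℝ) with hU
  have hsU : star U = Uᵀ := by
    rw [star_eq_conjTranspose]; ext i j; simp [Matrix.conjTranspose_apply]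
  have hU2 : U * Uᵀ = 1 := by
    rw [← hsU]; exact Matrix.mem_unitaryGroup_iff.mp hH.eigenvectorUnitary.2
  set c : ℝ := Finset.univ.inf' (Finset.univ_nonempty) hH.eigenvalues with hc
  have hcpos : 0 < c := by
    rw [hc, Finset.lt_inf'_iff]
    exact fun i _ => hA.eigenvalues_pos i
  refine ⟨c, hcpos, fun x => ?_⟩
  set y : Fin d → ℝ := Uᵀ *ᵥ x with hy
  have hyv : y = x ᵥ* U := by rw [hy, Matrix.mulVec_transpose]
  have key1 : x ⬝ᵥ (A *ᵥ x) = y ⬝ᵥ (Matrix.diagonal hH.eigenvalues *ᵥ y) := by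
    conv_lhs => rw [hH.spectral_theorem]
    have hid : (RCLike.ofReal ∘ hH.eigenvalues : Fin d → ℝ) = hH.eigenvalues := by
      funext i; simp
    rw [hid, Unitary.conjStarAlgAut_apply, hsU, ← Matrix.mulVec_mulVec, ← Matrix.mulVec_mulVec,
      Matrix.dotProduct_mulVec x U, ← hyv, ← hy]
  have key2 : y ⬝ᵥ y = x ⬝ᵥ x := by
    have h1 : U *ᵥ y = x := by
      rw [hy, Matrix.mulVec_mulVec, hU2, Matrix.one_mulVec]
    calc y ⬝ᵥ y = (x ᵥ* U) ⬝ᵥ y := by rw [← hyv]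
    _ = x ⬝ᵥ (U *ᵥ y) := (Matrix.dotProduct_mulVec x U y).symm
    _ = x ⬝ᵥ x := by rw [h1]
  rw [key1, ← key2]
  simp only [dotProduct, Matrix.mulVec_diagonal, Finset.mul_sum]
  refine Finset.sum_le_sum fun i _ => ?_
  have h2 : c ≤ hH.eigenvalues i := Finset.inf'_le _ (Finset.mem_univ i)
  nlinarith [mul_self_nonneg (y i)]

lemma sylv_eq_zero {T X : Matrix (Fin d) (Fin d) ℝ} (hT : T.PosDef)
    (h : T * X + X * T = 0) : X = 0 := by
  have hH := hT.isHermitian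
  set U : Matrix (Fin d) (Fin d) ℝ := (hH.eigenvectorUnitary : Matrix (Fin d) (Fin d) ℝ) with hU
  have hU2 : U * star U = 1 := Matrix.mem_unitaryGroup_iff.mp hH.eigenvectorUnitary.2
  have hD : star U * T * U = Matrix.diagonal hH.eigenvalues := by
    simpa [Unitary.conjStarAlgAut_apply] using hH.conjStarAlgAut_star_eigenvectorUnitary
  set Z : Matrix (Fin d) (Fin d) ℝ := star U * X * U with hZ
  have e1 : ∀ P Q : Matrix (Fin d) (Fin d) ℝ,
      (star U * P * U) * (star U * Q * U) = star U * (P * Q) * U := by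
    intro P Q
    have h3 : U * (star U * (Q * U)) = Q * U := by
      rw [← Matrix.mul_assoc, hU2, Matrix.one_mul]
    simp only [Matrix.mul_assoc]
    rw [h3]
  have key : Matrix.diagonal hH.eigenvalues * Z + Z * Matrix.diagonal hH.eigenvalues = 0 := by
    have h2 : star U * (T * X + X * T) * U = 0 := by rw [h]; simp
    calc Matrix.diagonal hH.eigenvalues * Z + Z * Matrix.diagonal hH.eigenvalues
        = (star U * T * U) * (star U * X * U) + (star U * X * U) * (star U * T * U) := by
          rw [hD]
    _ = star U * (T * X) * U + star U * (X * T) * U := by rw [e1, e1]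
    _ = star U * (T * X + X * T) * U := by rw [← Matrix.add_mul, ← Matrix.mul_add]
    _ = 0 := h2
  have hZ0 : Z = 0 := by
    ext i j
    have hij := congrFun (congrFun key i) j
    simp only [Matrix.add_apply, Matrix.diagonal_mul, Matrix.mul_diagonal,
      Matrix.zero_apply] at hij
    have hpos : 0 < hH.eigenvalues i + hH.eigenvalues j :=
      add_pos (hT.eigenvalues_pos i) (hT.eigenvalues_pos j)
    have h4 : Z i j * (hH.eigenvalues i + hH.eigenvalues j) = 0 := by
      linear_combination hij
    rcases mul_eq_zero.mp h4 with h' | h'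
    · exact h'
    · exact absurd h' (ne_of_gt hpos)
  have hX : U * Z * star U = X := by
    rw [hZ]
    simp only [Matrix.mul_assoc]
    rw [hU2, Matrix.mul_one, ← Matrix.mul_assoc, hU2, Matrix.one_mul]
  rw [← hX, hZ0, Matrix.mul_zero, Matrix.zero_mul]

lemma sylv_injective {T : Matrix (Fin d) (Fin d) ℝ} (hT : T.PosDef)
    {X Y : Matrix (Fin d) (Fin d) ℝ} (h : sylv T X = sylv T Y) : X = Y := by
  have h0 : T * (X - Y) + (X - Y) * T = 0 := by
    simp only [sylv] at h
    rw [Matrix.mul_sub, Matrix.sub_mul, sub_add_sub_comm, h, sub_self]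
  exact sub_eq_zero.mp (sylv_eq_zero hT h0)

lemma posDef_conj {M N : Matrix (Fin d) (Fin d) ℝ} (hM : M.PosDef) (hN : N.PosDef) :
    (N * M * N).PosDef := by
  have hNh := hN.isHermitian
  have hNt : Nᵀ = N := by rw [← real_conjTranspose_eq]; exact hNh
  rw [posDef_iff_dotProduct_mulVec]
  constructor
  · have h1 : (N * M * N)ᴴ = Nᴴ * Mᴴ * Nᴴ := by
      rw [Matrix.conjTranspose_mul, Matrix.conjTranspose_mul, Matrix.mul_assoc]
    rw [Matrix.IsHermitian, h1, hNh, hM.isHermitian]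
  · intro x hx
    have hNx : N *ᵥ x ≠ 0 := by
      intro h0
      have h5 := hN.dotProduct_mulVec_pos hx
      rw [h0, dotProduct_zero] at h5
      exact lt_irrefl 0 h5
    have key : star x ⬝ᵥ ((N * M * N) *ᵥ x) = star (N *ᵥ x) ⬝ᵥ (M *ᵥ (N *ᵥ x)) := by
      rw [star_trivial, star_trivial, ← Matrix.mulVec_mulVec, ← Matrix.mulVec_mulVec,
        Matrix.dotProduct_mulVec x N, ← Matrix.mulVec_transpose, hNt]
    rw [key]
    exact hM.dotProduct_mulVec_pos hNx

lemma posDef_of_sq {Q A : Matrix (Fin d) (Fin d) ℝ} (hQ : Q.PosSemidef) (hsq : Q * Q = A)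
    (hA : A.PosDef) : Q.PosDef := by
  refine PosDef.of_dotProduct_mulVec_pos hQ.1 fun ⦃x⦄ hx => ?_
  rcases lt_or_eq_of_le (hQ.dotProduct_mulVec_nonneg x) with h | h
  · exact h
  · exfalso
    have hQx : Q *ᵥ x = 0 := (hQ.dotProduct_mulVec_zero_iff x).mp h.symm
    have hAx : A *ᵥ x = 0 := by
      rw [← hsq, ← Matrix.mulVec_mulVec, hQx, Matrix.mulVec_zero]
    have h2 := hA.dotProduct_mulVec_pos hx
    rw [hAx, dotProduct_zero] at h2
    exact lt_irrefl 0 h2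

lemma taylor_two {ψ ψ' : ℝ → ℝ} {t : Set ℝ} (hto : IsOpen t) (ht0 : (0:ℝ) ∈ t)
    (hd : ∀ x ∈ t, HasDerivAt ψ (ψ' x) x) {c : ℝ} (hd2 : HasDerivAt ψ' c 0) :
    (fun ε => ψ ε - ψ 0 - ε * ψ' 0 - ε^2 * (c/2)) =o[𝓝 (0:ℝ)] fun ε => ε^2 := by
  set q : ℝ → ℝ := fun ε => ψ ε - ψ 0 - ε * ψ' 0 - ε^2 * (c/2) with hq_def
  set q' : ℝ → ℝ := fun ε => ψ' ε - ψ' 0 - ε * c with hq'_def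
  have hq : ∀ x ∈ t, HasDerivAt q (q' x) x := by
    intro x hx
    have h1 := (((hd x hx).sub_const (ψ 0)).sub ((hasDerivAt_id x).mul_const (ψ' 0))).sub
        ((hasDerivAt_pow 2 x).mul_const (c/2))
    exact h1.congr_deriv (by simp [hq'_def]; ring)
  have hq'o : (fun x : ℝ => q' x) =o[𝓝 (0:ℝ)] fun x => x := by
    have := hasDerivAt_iff_isLittleO.mp hd2
    simpa [hq'_def, mul_comm] using this
  rw [isLittleO_iff] at hq'o ⊢
  intro δ hδ
  have h1 : {x : ℝ | ‖q' x‖ ≤ δ * ‖x‖} ∩ t ∈ 𝓝 (0:ℝ) :=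
    Filter.inter_mem (hq'o hδ) (hto.mem_nhds ht0)
  obtain ⟨r, hr, hball⟩ := Metric.mem_nhds_iff.mp h1
  have : Metric.ball (0:ℝ) r ∈ 𝓝 (0:ℝ) := Metric.ball_mem_nhds _ hr
  filter_upwards [this] with ε hε
  have hεr : |ε| < r := by simpa [Real.dist_eq] using hε
  set D := Metric.closedBall (0:ℝ) |ε| with hD
  have hDsub : D ⊆ Metric.ball (0:ℝ) r := fun y hy => by
    have hy' : dist y (0:ℝ) ≤ |ε| := Metric.mem_closedBall.mp hy
    exact Metric.mem_ball.mpr (lt_of_le_of_lt hy' hεr)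
  have hder : ∀ y ∈ D, HasDerivWithinAt q (q' y) D y := fun y hy =>
    (hq y (hball (hDsub hy)).2).hasDerivWithinAt
  have hbound : ∀ y ∈ D, ‖q' y‖ ≤ δ * |ε| := by
    intro y hy
    have h2 := (hball (hDsub hy)).1
    have h3 : ‖y‖ ≤ |ε| := by
      simpa [Real.dist_eq, Real.norm_eq_abs] using Metric.mem_closedBall.mp hy
    calc ‖q' y‖ ≤ δ * ‖y‖ := h2
    _ ≤ δ * |ε| := by nlinarith [norm_nonneg y]
  have hmem0 : (0:ℝ) ∈ D := by simp [hD]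
  have hmemε : ε ∈ D := by simp [hD, Real.dist_eq]
  have := Convex.norm_image_sub_le_of_norm_hasDerivWithin_le hder hbound
    (convex_closedBall _ _) hmem0 hmemε
  have hq0 : q 0 = 0 := by simp [hq_def]
  rw [hq0, sub_zero, sub_zero] at this
  calc ‖q ε‖ ≤ δ * |ε| * ‖ε‖ := this
  _ = δ * ‖ε^2‖ := by rw [Real.norm_eq_abs, Real.norm_eq_abs, abs_pow]; ring

section NormStuff
attribute [local instance] Matrix.linftyOpNormedRing Matrix.linftyOpNormedAlgebra

lemma entry_abs_le_norm (M : Matrix (Fin d) (Fin d) ℝ) (i j : Fin d) : |M i j| ≤ ‖M‖ := by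
  have h1 : ‖M i j‖₊ ≤ ∑ k, ‖M i k‖₊ :=
    Finset.single_le_sum (f := fun k => ‖M i k‖₊) (fun _ _ => zero_le) (Finset.mem_univ j)
  have h2 : (∑ k, ‖M i k‖₊) ≤ Finset.univ.sup fun i => ∑ j, ‖M i j‖₊ :=
    Finset.le_sup (f := fun i => ∑ j, ‖M i j‖₊) (Finset.mem_univ i)
  have h3 : ‖M i j‖₊ ≤ ‖M‖₊ := by
    rw [Matrix.linfty_opNNNorm_def]
    exact le_trans h1 h2
  calc |M i j| = ‖M i j‖ := (Real.norm_eq_abs _).symm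
  _ ≤ ‖M‖ := by exact_mod_cast h3

lemma quad_bound (N : Matrix (Fin d) (Fin d) ℝ) (x : Fin d → ℝ) :
    |x ⬝ᵥ (N *ᵥ x)| ≤ ‖N‖ * d * (x ⬝ᵥ x) := by
  have h0 : ∀ i j : Fin d, |x i * (N i j * x j)| ≤ ‖N‖ * (|x i| * |x j|) := by
    intro i j
    rw [abs_mul, abs_mul]
    calc |x i| * (|N i j| * |x j|) ≤ |x i| * (‖N‖ * |x j|) := by
          gcongr
          exact entry_abs_le_norm N i j
    _ = ‖N‖ * (|x i| * |x j|) := by ring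
  have h1 : |x ⬝ᵥ (N *ᵥ x)| ≤ ∑ i, ∑ j, ‖N‖ * (|x i| * |x j|) := by
    rw [dotProduct]
    refine le_trans (Finset.abs_sum_le_sum_abs _ _) (Finset.sum_le_sum fun i _ => ?_)
    rw [Matrix.mulVec, dotProduct, Finset.mul_sum]
    refine le_trans (Finset.abs_sum_le_sum_abs _ _) (Finset.sum_le_sum fun j _ => h0 i j)
  have h2 : (∑ i, ∑ j, ‖N‖ * (|x i| * |x j|)) = ‖N‖ * (∑ i, |x i|)^2 := by
    simp_rw [← Finset.mul_sum, ← Finset.sum_mul]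
    ring
  have h3 : (∑ i, |x i|)^2 ≤ (d : ℝ) * ∑ i, |x i|^2 := by
    have := sq_sum_le_card_mul_sum_sq (s := (Finset.univ : Finset (Fin d)))
      (f := fun i => |x i|)
    simpa using this
  have h4 : (∑ i : Fin d, |x i|^2) = x ⬝ᵥ x := by
    rw [dotProduct]
    refine Finset.sum_congr rfl fun i _ => ?_
    rw [sq_abs]; ring
  have hN : 0 ≤ ‖N‖ := norm_nonneg N
  calc |x ⬝ᵥ (N *ᵥ x)| ≤ ‖N‖ * (∑ i, |x i|)^2 := by rw [← h2]; exact h1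
  _ ≤ ‖N‖ * ((d:ℝ) * (x ⬝ᵥ x)) := by
      rw [← h4]; nlinarith
  _ = ‖N‖ * d * (x ⬝ᵥ x) := by ring

lemma eventually_posDef {ι : Type*} {l : Filter ι} {A : Matrix (Fin d) (Fin d) ℝ}
    (hA : A.PosDef) {f : ι → Matrix (Fin d) (Fin d) ℝ}
    (hf : Tendsto f l (𝓝 A)) (hsym : ∀ᶠ k in l, (f k).IsHermitian) :
    ∀ᶠ k in l, (f k).PosDef := by
  obtain ⟨c, hc, hcoer⟩ := posDef_coercive hA
  set δ : ℝ := c / (d + 1) with hδ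
  have hδpos : 0 < δ := by positivity
  have hnear : ∀ᶠ k in l, ‖f k - A‖ < δ := by
    have := Metric.tendsto_nhds.mp hf δ hδpos
    filter_upwards [this] with k hk
    rwa [dist_eq_norm] at hk
  filter_upwards [hnear, hsym] with k hk hsk
  refine PosDef.of_dotProduct_mulVec_pos hsk fun ⦃x⦄ hx => ?_
  rw [star_trivial]
  have hxx : 0 < x ⬝ᵥ x := dotProduct_self_pos hx
  have hsplit : x ⬝ᵥ (f k *ᵥ x) = x ⬝ᵥ (A *ᵥ x) + x ⬝ᵥ ((f k - A) *ᵥ x) := by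
    rw [Matrix.sub_mulVec, dotProduct_sub]
    ring
  have hb := quad_bound (f k - A) x
  have hco := hcoer x
  have hd1 : ‖f k - A‖ * d * (x ⬝ᵥ x) ≤ δ * d * (x ⬝ᵥ x) := by
    have h6 : (0:ℝ) ≤ (d:ℝ) * (x ⬝ᵥ x) := mul_nonneg (Nat.cast_nonneg d) hxx.le
    have h7 := mul_le_mul_of_nonneg_right (le_of_lt hk) h6
    nlinarith [h7]
  have hdc : δ * (d:ℝ) < c := by
    rw [hδ]
    rw [div_mul_eq_mul_div, div_lt_iff₀ (by positivity)]
    nlinarith [Nat.cast_nonneg (α := ℝ) d]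
  rw [hsplit]
  have habs := abs_le.mp hb
  nlinarith [habs.1, hd1, hco, mul_pos (sub_pos.mpr hdc) hxx]

end NormStuff
end Aux

section Main
attribute [local instance] Matrix.linftyOpNormedRing Matrix.linftyOpNormedAlgebra

/-- Second-order Taylor expansion of the squared Bures distance:
with `T = (Σ^{1/2} H₀ Σ^{1/2})^{1/2}`, `Y₁ = L_T⁻¹[Σ^{1/2} H₁ Σ^{1/2}]`, `Y₂ = L_T⁻¹[Y₁²]`,
`B²(Σ, H₀ + ε H₁) = B²(Σ, H₀) + ε tr H₁ − 2ε tr Y₁ + 2ε² tr Y₂ + o(ε²)` as `ε → 0`. -/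
theorem bures_second_order_expansion {d : ℕ}
    (S H0 H1 : Matrix (Fin d) (Fin d) ℝ)
    (hS : S.PosDef) (hH0 : H0.PosDef) (hH1 : H1.IsSymm)
    (T : Matrix (Fin d) (Fin d) ℝ) (hT : T = psdSqrt (psdSqrt S * H0 * psdSqrt S))
    (Y1 Y2 : Matrix (Fin d) (Fin d) ℝ)
    (hY1 : sylv T Y1 = psdSqrt S * H1 * psdSqrt S)
    (hY2 : sylv T Y2 = Y1 * Y1) :
    (fun ε : ℝ =>
        bures2 S (H0 + ε • H1)
          - (bures2 S H0 + ε * H1.trace - 2 * ε * Y1.trace + 2 * ε ^ 2 * Y2.trace))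
      =o[𝓝 (0 : ℝ)] fun ε => ε ^ 2 := by
  classical
  -- basic positive-definiteness facts
  set R := psdSqrt S with hR
  have hSpsd := hS.posSemidef
  have hRdef : R = hSpsd.sqrt := by rw [hR, psdSqrt, dif_pos hSpsd]
  have hRpsd : R.PosSemidef := by rw [hRdef]; exact hSpsd.posSemidef_sqrt
  have hRsq : R * R = S := by rw [hRdef]; exact hSpsd.sqrt_mul_self
  have hRpd : R.PosDef := posDef_of_sq hRpsd hRsq hS
  set A := R * H0 * R with hA
  set B := R * H1 * R with hB
  have hApd : A.PosDef := posDef_conj hH0 hRpd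
  have hApsd := hApd.posSemidef
  have hTdef : T = hApsd.sqrt := by rw [hT, psdSqrt, dif_pos hApsd]
  have hTpsd : T.PosSemidef := by rw [hTdef]; exact hApsd.posSemidef_sqrt
  have hTsq : T * T = A := by rw [hTdef]; exact hApsd.sqrt_mul_self
  have hTpd : T.PosDef := posDef_of_sq hTpsd hTsq hApd
  have hBh : B.IsHermitian := by
    apply isHermitian_of_transpose_eq
    rw [hB, Matrix.transpose_mul, Matrix.transpose_mul,
      transpose_eq_of_isHermitian hRpsd.1, hH1.eq, Matrix.mul_assoc]
  -- the squaring map and its derivative at T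
  set Fm : Matrix (Fin d) (Fin d) ℝ → Matrix (Fin d) (Fin d) ℝ := fun X => X * X with hFm
  set lin : Matrix (Fin d) (Fin d) ℝ →ₗ[ℝ] Matrix (Fin d) (Fin d) ℝ :=
    { toFun := fun X => T * X + X * T
      map_add' := fun X Y => by
        simp only [Matrix.mul_add, Matrix.add_mul]; abel
      map_smul' := fun c X => by
        simp only [RingHom.id_apply, smul_add, mul_smul_comm, smul_mul_assoc] } with hlin
  have hinj : Function.Injective lin := by
    intro X Y hXY
    exact sylv_injective hTpd (X := X) (Y := Y) hXY
  set lT' : Matrix (Fin d) (Fin d) ℝ ≃L[ℝ] Matrix (Fin d) (Fin d) ℝ :=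
    (LinearEquiv.ofInjectiveEndo lin hinj).toContinuousLinearEquiv with hlT'
  have hlT'app : ∀ X, (lT' : Matrix (Fin d) (Fin d) ℝ →L[ℝ] Matrix (Fin d) (Fin d) ℝ) X
      = T * X + X * T := fun X => by
    rw [hlT']
    rw [ContinuousLinearEquiv.coe_coe]
    rw [LinearEquiv.coe_toContinuousLinearEquiv']
    rfl
  have hFd : HasFDerivAt Fm (lT' : Matrix (Fin d) (Fin d) ℝ →L[ℝ] Matrix (Fin d) (Fin d) ℝ) T := by
    have h1 := (hasFDerivAt_id (𝕜 := ℝ) T).mul' (hasFDerivAt_id T)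
    have hclm : (lT' : Matrix (Fin d) (Fin d) ℝ →L[ℝ] Matrix (Fin d) (Fin d) ℝ)
        = T • ContinuousLinearMap.id ℝ (Matrix (Fin d) (Fin d) ℝ)
          + (ContinuousLinearMap.id ℝ (Matrix (Fin d) (Fin d) ℝ)).smulRight T := by
      ext X
      rw [hlT'app]
      simp [ContinuousLinearMap.smul_apply, smul_eq_mul]
    rw [hclm]
    exact h1
  have hF2 : ContDiffAt ℝ 2 Fm T := (contDiff_id.mul contDiff_id).contDiffAt
  have hn : (2 : WithTop ℕ∞) ≠ 0 := by norm_num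
  set g := hF2.localInverse hFd hn with hg
  have hstrict : HasStrictFDerivAt Fm
      (lT' : Matrix (Fin d) (Fin d) ℝ →L[ℝ] Matrix (Fin d) (Fin d) ℝ) T :=
    hF2.hasStrictFDerivAt' hFd hn
  have hFmT : Fm T = A := hTsq
  have hgA : g A = T := by rw [← hFmT, hg]; exact hF2.localInverse_apply_image hFd hn
  have hgsmooth : ContDiffAt ℝ 2 g A := by
    rw [← hFmT, hg]; exact hF2.to_localInverse hFd hn
  have h_left : ∀ᶠ X in 𝓝 T, g (Fm X) = X := by
    rw [hg]; exact hstrict.eventually_left_inverse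
  have h_right : ∀ᶠ M in 𝓝 A, Fm (g M) = M := by
    rw [← hFmT, hg]; exact hstrict.eventually_right_inverse
  have hgcont : ContinuousAt g A := by
    rw [← hFmT, hg]; exact hstrict.localInverse_continuousAt
  -- the curve and its lift
  set crv : ℝ → Matrix (Fin d) (Fin d) ℝ := fun ε => A + ε • B with hcrv
  have hcrv_cd : ContDiff ℝ 2 crv := contDiff_const.add (contDiff_id.smul contDiff_const)
  have hcrv0 : crv 0 = A := by rw [hcrv]; simp
  have hcrvt : Tendsto crv (𝓝 0) (𝓝 A) := by
    rw [← hcrv0]; exact hcrv_cd.continuous.tendsto 0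
  set u : ℝ → Matrix (Fin d) (Fin d) ℝ := fun ε => g (crv ε) with hu
  have hu2 : ContDiffAt ℝ 2 u 0 := by
    have hgs' : ContDiffAt ℝ 2 g (crv 0) := hcrv0.symm ▸ hgsmooth
    exact hgs'.comp 0 hcrv_cd.contDiffAt
  have hutend : Tendsto u (𝓝 0) (𝓝 T) := by
    have h1 := hgcont.tendsto.comp hcrvt
    rwa [hgA] at h1
  have hE1 : ∀ᶠ ε in 𝓝 (0:ℝ), u ε * u ε = crv ε := by
    filter_upwards [hcrvt.eventually h_right] with ε hε
    exact hε
  have hcrv_herm : ∀ ε : ℝ, (crv ε).IsHermitian := fun ε => by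
    apply isHermitian_of_transpose_eq
    rw [hcrv]
    simp only [Matrix.transpose_add, Matrix.transpose_smul,
      transpose_eq_of_isHermitian hApd.1, transpose_eq_of_isHermitian hBh]
  have htrans_cont : Continuous (fun M : Matrix (Fin d) (Fin d) ℝ => Mᵀ) := by
    have := (Matrix.transposeLinearEquiv (Fin d) (Fin d) ℝ ℝ).toLinearMap.continuous_of_finiteDimensional
    exact this
  have hTt : Tᵀ = T := transpose_eq_of_isHermitian hTpd.1
  have hutendT : Tendsto (fun ε => (u ε)ᵀ) (𝓝 0) (𝓝 T) := by
    have h1 := (htrans_cont.tendsto T).comp hutend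
    rwa [hTt] at h1
  have hu_mem : ∀ᶠ ε in 𝓝 (0:ℝ), g (Fm (u ε)) = u ε := hutend.eventually h_left
  have hu_memT : ∀ᶠ ε in 𝓝 (0:ℝ), g (Fm ((u ε)ᵀ)) = (u ε)ᵀ := hutendT.eventually h_left
  have hu_symm : ∀ᶠ ε in 𝓝 (0:ℝ), (u ε)ᵀ = u ε := by
    filter_upwards [hE1, hu_mem, hu_memT] with ε h1 h2 h3
    have hFt : Fm ((u ε)ᵀ) = Fm (u ε) := by
      show (u ε)ᵀ * (u ε)ᵀ = u ε * u ε
      rw [← Matrix.transpose_mul, h1, transpose_eq_of_isHermitian (hcrv_herm ε), ← h1]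
    rw [← h3, hFt, h2]
  have hu_herm : ∀ᶠ ε in 𝓝 (0:ℝ), (u ε).IsHermitian :=
    hu_symm.mono fun ε h => isHermitian_of_transpose_eq h
  have hu_pd : ∀ᶠ ε in 𝓝 (0:ℝ), (u ε).PosDef := eventually_posDef hTpd hutend hu_herm
  have hcrv_pd : ∀ᶠ ε in 𝓝 (0:ℝ), (crv ε).PosDef :=
    eventually_posDef hApd hcrvt (Filter.Eventually.of_forall hcrv_herm)
  have hE2 : ∀ᶠ ε in 𝓝 (0:ℝ), psdSqrt (crv ε) = u ε := by
    filter_upwards [hE1, hu_pd, hcrv_pd] with ε h1 h2 h3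
    have hps : (crv ε).PosSemidef := h3.posSemidef
    have h4 : u ε = hps.sqrt :=
      (h2.posSemidef).eq_sqrt_of_sq_eq hps (by rw [pow_two]; exact h1)
    rw [psdSqrt, dif_pos hps, h4]
  -- derivatives of u
  obtain ⟨s₀, hs₀mem, hs₀cd⟩ := hu2.contDiffOn le_rfl (by simp)
  have hs1 : s₀ ∩ {ε | u ε * u ε = crv ε} ∈ 𝓝 (0:ℝ) := Filter.inter_mem hs₀mem hE1
  obtain ⟨t, hts, hto, ht0⟩ := mem_nhds_iff.mp hs1
  have ht1 : t ⊆ s₀ := fun x hx => (hts hx).1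
  have ht2 : ∀ ε ∈ t, u ε * u ε = crv ε := fun x hx => (hts hx).2
  set W := deriv u with hWdef
  have hudiff : ∀ ε ∈ t, HasDerivAt u (W ε) ε := by
    intro ε hε
    have hdo : DifferentiableOn ℝ u t :=
      (hs₀cd.mono ht1).differentiableOn (by norm_num)
    exact (hdo.differentiableAt (hto.mem_nhds hε)).hasDerivAt
  have hWc1 : ContDiffOn ℝ 1 W t := (hs₀cd.mono ht1).deriv_of_isOpen hto (by norm_num)
  have hWdiff0 : DifferentiableAt ℝ W 0 :=
    ((hWc1.differentiableOn (by norm_num)).differentiableAt (hto.mem_nhds ht0))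
  set W2 := deriv W 0 with hW2def
  have hW2 : HasDerivAt W W2 0 := hWdiff0.hasDerivAt
  have hsylv1 : ∀ ε ∈ t, W ε * u ε + u ε * W ε = B := by
    intro ε hε
    have h1 : HasDerivAt (fun x => u x * u x) (W ε * u ε + u ε * W ε) ε :=
      (hudiff ε hε).mul (hudiff ε hε)
    have h2 : HasDerivAt crv B ε := by
      rw [hcrv]
      exact (((hasDerivAt_id ε).smul_const B).const_add A).congr_deriv (one_smul ℝ B)
    have heq : (fun x => u x * u x) =ᶠ[𝓝 ε] crv :=
      eventually_of_mem (hto.mem_nhds hε) (fun x hx => ht2 x hx)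
    exact h1.unique (h2.congr_of_eventuallyEq heq)
  have hu0 : u 0 = T := by rw [hu]; show g (crv 0) = T; rw [hcrv0, hgA]
  have hW0 : W 0 = Y1 := by
    apply sylv_injective hTpd
    show T * W 0 + W 0 * T = sylv T Y1
    rw [hY1]
    have h1 := hsylv1 0 ht0
    rw [hu0] at h1
    rw [← h1]
    abel
  have hφconst : (fun ε => W ε * u ε + u ε * W ε) =ᶠ[𝓝 (0:ℝ)] fun _ => B :=
    eventually_of_mem (hto.mem_nhds ht0) (fun x hx => hsylv1 x hx)
  have hφd : HasDerivAt (fun ε => W ε * u ε + u ε * W ε)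
      (W2 * u 0 + W 0 * W 0 + (W 0 * W 0 + u 0 * W2)) 0 :=
    (hW2.mul (hudiff 0 ht0)).add ((hudiff 0 ht0).mul hW2)
  have hφd0 : HasDerivAt (fun ε => W ε * u ε + u ε * W ε) 0 0 :=
    (hasDerivAt_const (0:ℝ) B).congr_of_eventuallyEq hφconst
  have heq2 : W2 * u 0 + W 0 * W 0 + (W 0 * W 0 + u 0 * W2) = 0 := hφd.unique hφd0
  rw [hu0, hW0] at heq2
  have hW2val : W2 = (-2 : ℝ) • Y2 := by
    apply sylv_injective hTpd
    have h6 : T * W2 + W2 * T + (Y1 * Y1 + Y1 * Y1)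
        = W2 * T + Y1 * Y1 + (Y1 * Y1 + T * W2) := by abel
    rw [heq2] at h6
    have h7 : T * W2 + W2 * T = -(Y1 * Y1 + Y1 * Y1) := eq_neg_of_add_eq_zero_left h6
    have h5 : sylv T W2 = (-2:ℝ) • (Y1 * Y1) := by
      rw [sylv, h7, neg_smul, two_smul]
    have h8 : sylv T ((-2:ℝ) • Y2) = (-2:ℝ) • (Y1 * Y1) := by
      rw [sylv, mul_smul_comm, smul_mul_assoc, ← smul_add, ← sylv, hY2]
    rw [h5, h8]
  -- traces
  set trL : Matrix (Fin d) (Fin d) ℝ →L[ℝ] ℝ :=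
    LinearMap.toContinuousLinearMap (Matrix.traceLinearMap (Fin d) ℝ ℝ) with htrLdef
  have htr_apply : ∀ M : Matrix (Fin d) (Fin d) ℝ, trL M = M.trace := fun M => by
    rw [htrLdef]; simp [LinearMap.coe_toContinuousLinearMap']
  have hψd : ∀ ε ∈ t, HasDerivAt (fun x => (u x).trace) ((W ε).trace) ε := by
    intro ε hε
    have h1 := (trL.hasFDerivAt (x := u ε)).comp_hasDerivAt ε (hudiff ε hε)
    simpa [htr_apply, Function.comp_def] using h1.congr_deriv (htr_apply _)
  have hψ'd : HasDerivAt (fun ε => (W ε).trace) (W2.trace) 0 := by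
    have h1 := (trL.hasFDerivAt (x := W 0)).comp_hasDerivAt 0 hW2
    simpa [htr_apply, Function.comp_def] using h1.congr_deriv (htr_apply _)
  have htaylor := taylor_two hto ht0 hψd hψ'd
  rw [hu0, hW0, hW2val] at htaylor
  have hW2tr : ((-2:ℝ) • Y2).trace = -2 * Y2.trace := by
    rw [Matrix.trace_smul]; simp
  rw [hW2tr] at htaylor
  -- final assembly
  have hfinal : (fun ε : ℝ =>
        bures2 S (H0 + ε • H1)
          - (bures2 S H0 + ε * H1.trace - 2 * ε * Y1.trace + 2 * ε ^ 2 * Y2.trace))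
      =ᶠ[𝓝 (0:ℝ)] fun ε =>
        (-2) * ((u ε).trace - T.trace - ε * Y1.trace - ε^2 * ((-2 * Y2.trace)/2)) := by
    filter_upwards [hE2] with ε h1
    have hsand : R * (H0 + ε • H1) * R = crv ε := by
      rw [hcrv, hA, hB]
      simp only [Matrix.mul_add, Matrix.add_mul, mul_smul_comm, smul_mul_assoc]
    have hb1 : bures2 S (H0 + ε • H1)
        = S.trace + (H0.trace + ε * H1.trace) - 2 * (u ε).trace := by
      rw [bures2, ← hR, hsand, h1]
      simp [Matrix.trace_add, Matrix.trace_sub, Matrix.trace_smul, smul_eq_mul]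
    have hb0 : bures2 S H0 = S.trace + H0.trace - 2 * T.trace := by
      rw [bures2, ← hR, ← hA, ← hT]
      simp [Matrix.trace_add, Matrix.trace_sub, Matrix.trace_smul, smul_eq_mul]
    rw [hb1, hb0]
    ring
  exact hfinal.trans_isLittleO (htaylor.const_mul_left (-2))
end Main
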